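/- Let A be a square complex matrix, and suppose there exists a positive definite matrix X and operators such that the LMI [A* C*; B* D*] diag(X, Γ_R) [A B; C D] − diag(X, Γ_S) ≺ 0 holds, where Γ_R = ⊕_p (I ⊗ Γ_p°) and Γ_S = ⊕_p (I ⊗ Γ_p°) with Γ_p° ≻ 0. Then for the transfer function M̂(λ) = D + λ C (I − λA)⁻¹ B one has sup_{|λ|<1} ‖Γ_R^{1/2} M̂(λ) Γ_S^{−1/2}‖ < 1. In particular, taking Γ_R = Γ_S = I: if [A* C*; B* D*] diag(X, I) [A B; C D] − diag(X, I) ≺ 0 with X ≻ 0, then A has spectral radius less than 1 and sup_{|λ|<1} ‖D + λC(I−λA)⁻¹B‖ < 1. -/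

import Mathlib

open Matrix
open scoped Kronecker ComplexOrder

/-- The operator norm of a (rectangular) matrix viewed as an operator between
Euclidean spaces. -/
noncomputable def euclideanOpNorm {a b : Type*} [Fintype a] [Fintype b] [DecidableEq b]
    (T : Matrix a b ℂ) : ℝ :=
  ‖LinearMap.toContinuousLinearMap (Matrix.toEuclideanLin T)‖

section BRLAux

noncomputable def nsq {n : Type*} [Fintype n] (v : n → ℂ) : ℝ := Complex.re (star v ⬝ᵥ v)

lemma nsq_eq_sum {n : Type*} [Fintype n] (v : n → ℂ) : nsq v = ∑ i, ‖v i‖ ^ 2 := by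
  simp [nsq, dotProduct, Complex.re_sum, ← Complex.normSq_eq_norm_sq, Complex.normSq_apply,
    Complex.mul_re]

lemma nsq_nonneg {n : Type*} [Fintype n] (v : n → ℂ) : 0 ≤ nsq v := by
  rw [nsq_eq_sum]; positivity

lemma nsq_pos {n : Type*} [Fintype n] {v : n → ℂ} (hv : v ≠ 0) : 0 < nsq v := by
  rcases Function.ne_iff.mp hv with ⟨i, hi⟩
  rw [nsq_eq_sum]
  refine Finset.sum_pos' (fun j _ => by positivity) ⟨i, Finset.mem_univ i, ?_⟩
  have : ‖v i‖ ≠ 0 := norm_ne_zero_iff.mpr hi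
  positivity

lemma star_sum_elim {n m : Type*} (x : n → ℂ) (u : m → ℂ) :
    star (Sum.elim x u) = Sum.elim (star x) (star u) := by
  funext i; cases i <;> rfl

lemma nsq_sum_elim {n m : Type*} [Fintype n] [Fintype m] (x : n → ℂ) (u : m → ℂ) :
    nsq (Sum.elim x u) = nsq x + nsq u := by
  rw [nsq, star_sum_elim, sumElim_dotProduct_sumElim, Complex.add_re]; rfl

lemma posDef_coercive {n : Type*} [Fintype n] [DecidableEq n] {M : Matrix n n ℂ}
    (hM : M.PosDef) :
    ∃ ε : ℝ, 0 < ε ∧ ∀ v : n → ℂ, ε * nsq v ≤ Complex.re (star v ⬝ᵥ M *ᵥ v) := by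
  cases isEmpty_or_nonempty n with
  | inl h => exact ⟨1, one_pos, fun v => by simp [nsq, dotProduct]⟩
  | inr h =>
    classical
    have hH := hM.isHermitian
    set ε := Finset.univ.inf' Finset.univ_nonempty hH.eigenvalues with hεdef
    have hε : 0 < ε := by
      rw [hεdef, Finset.lt_inf'_iff]
      exact fun i _ => hM.eigenvalues_pos i
    have hεle : ∀ i, ε ≤ hH.eigenvalues i := fun i =>
      Finset.inf'_le _ (Finset.mem_univ i)
    refine ⟨ε, hε, fun v => ?_⟩
    have hUU : (hH.eigenvectorUnitary : Matrix n n ℂ) *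
        star (hH.eigenvectorUnitary : Matrix n n ℂ) = 1 :=
      (Matrix.mem_unitaryGroup_iff).mp hH.eigenvectorUnitary.2
    have hdiag : (Matrix.diagonal (fun i => ((hH.eigenvalues i - ε : ℝ) : ℂ))).PosSemidef := by
      refine Matrix.posSemidef_diagonal_iff.mpr fun i => ?_
      rw [Complex.zero_le_real]
      linarith [hεle i]
    have hpsd : (M - (ε : ℂ) • 1).PosSemidef := by
      have key : M - (ε : ℂ) • 1 =
          (hH.eigenvectorUnitary : Matrix n n ℂ) *
            (Matrix.diagonal (fun i => ((hH.eigenvalues i - ε : ℝ) : ℂ))) *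
            star (hH.eigenvectorUnitary : Matrix n n ℂ) := by
        have h1 : (Matrix.diagonal (fun i => ((hH.eigenvalues i - ε : ℝ) : ℂ))) =
            Matrix.diagonal (RCLike.ofReal ∘ hH.eigenvalues) - (ε : ℂ) • 1 := by
          ext i j
          by_cases hij : i = j <;>
            simp [Matrix.diagonal_apply, Matrix.one_apply, hij, Complex.ofReal_sub]
        rw [h1, Matrix.mul_sub, Matrix.sub_mul, Matrix.mul_smul, Matrix.smul_mul,
          Matrix.mul_one, hUU, ← Unitary.conjStarAlgAut_apply (S := ℂ), ← hH.spectral_theorem]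
      rw [key]
      exact hdiag.mul_mul_conjTranspose_same _
    have h0 := hpsd.re_dotProduct_nonneg v
    rw [Matrix.sub_mulVec, Matrix.smul_mulVec, Matrix.one_mulVec, dotProduct_sub,
      dotProduct_smul] at h0
    simp only [RCLike.re_to_complex, Complex.sub_re, smul_eq_mul, Complex.re_ofReal_mul] at h0
    simp only [nsq]
    linarith

lemma euclid_norm_eq {n : Type*} [Fintype n] (v : n → ℂ) :
    ‖(WithLp.equiv 2 (n → ℂ)).symm v‖ = Real.sqrt (nsq v) := by
  rw [EuclideanSpace.norm_eq, nsq_eq_sum]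
  rfl

lemma nsq_mulVec_le {m n : Type*} [Fintype m] [Fintype n] [DecidableEq n]
    (T : Matrix m n ℂ) (u : n → ℂ) :
    Real.sqrt (nsq (T *ᵥ u)) ≤ euclideanOpNorm T * Real.sqrt (nsq u) := by
  have h := (LinearMap.toContinuousLinearMap (Matrix.toEuclideanLin T)).le_opNorm
    ((WithLp.equiv 2 (n → ℂ)).symm u)
  rw [euclid_norm_eq] at h
  convert h using 2
  rw [← euclid_norm_eq]
  congr 1
  rfl

lemma nsq_mulVec_le_sq {m n : Type*} [Fintype m] [Fintype n] [DecidableEq n]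
    (T : Matrix m n ℂ) (u : n → ℂ) :
    nsq (T *ᵥ u) ≤ euclideanOpNorm T ^ 2 * nsq u := by
  have h := nsq_mulVec_le T u
  have h2 : Real.sqrt (nsq (T *ᵥ u)) ^ 2 ≤ (euclideanOpNorm T * Real.sqrt (nsq u)) ^ 2 :=
    pow_le_pow_left₀ (Real.sqrt_nonneg _) h 2
  rwa [Real.sq_sqrt (nsq_nonneg _), mul_pow, Real.sq_sqrt (nsq_nonneg _)] at h2

lemma euclideanOpNorm_le_of {m n : Type*} [Fintype m] [Fintype n] [DecidableEq n]
    (T : Matrix m n ℂ) {c : ℝ} (hc : 0 ≤ c)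
    (h : ∀ u : n → ℂ, Real.sqrt (nsq (T *ᵥ u)) ≤ c * Real.sqrt (nsq u)) :
    euclideanOpNorm T ≤ c := by
  refine ContinuousLinearMap.opNorm_le_bound _ hc fun v => ?_
  have hv : v = (WithLp.equiv 2 (n → ℂ)).symm (WithLp.equiv 2 (n → ℂ) v) := rfl
  rw [hv, euclid_norm_eq]
  have h2 : ‖LinearMap.toContinuousLinearMap (Matrix.toEuclideanLin T)
      ((WithLp.equiv 2 (n → ℂ)).symm (WithLp.equiv 2 (n → ℂ) v))‖
      = Real.sqrt (nsq (T *ᵥ (WithLp.equiv 2 (n → ℂ) v))) := by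
    rw [← euclid_norm_eq]
    congr 1
  rw [h2]
  exact h _

lemma dot_conjTranspose_mul {n m r : Type*} [Fintype n] [Fintype m] [Fintype r]
    (M : Matrix m n ℂ) (N : Matrix m r ℂ) (v : n → ℂ) (w : r → ℂ) :
    star v ⬝ᵥ (Mᴴ * N) *ᵥ w = star (M *ᵥ v) ⬝ᵥ N *ᵥ w := by
  rw [← Matrix.mulVec_mulVec, Matrix.dotProduct_mulVec (star v) Mᴴ, ← Matrix.star_mulVec]

lemma lmi_expand {n m r : Type*} [Fintype n] [Fintype m] [Fintype r]
    (A : Matrix n n ℂ) (B : Matrix n m ℂ) (C : Matrix r n ℂ) (D : Matrix r m ℂ)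
    (X : Matrix n n ℂ) (GR : Matrix r r ℂ) (GS : Matrix m m ℂ)
    (x : n → ℂ) (u : m → ℂ) :
    star (Sum.elim x u) ⬝ᵥ
      (-((fromBlocks Aᴴ Cᴴ Bᴴ Dᴴ) * (fromBlocks X 0 0 GR) * (fromBlocks A B C D)
        - fromBlocks X 0 0 GS)) *ᵥ (Sum.elim x u)
    = (star x ⬝ᵥ X *ᵥ x + star u ⬝ᵥ GS *ᵥ u)
      - (star (A *ᵥ x + B *ᵥ u) ⬝ᵥ X *ᵥ (A *ᵥ x + B *ᵥ u)
         + star (C *ᵥ x + D *ᵥ u) ⬝ᵥ GR *ᵥ (C *ᵥ x + D *ᵥ u)) := by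
  have hPH : fromBlocks Aᴴ Cᴴ Bᴴ Dᴴ = (fromBlocks A B C D)ᴴ := by
    rw [Matrix.fromBlocks_conjTranspose]
  rw [hPH, Matrix.mul_assoc, Matrix.neg_mulVec, Matrix.sub_mulVec, dotProduct_neg,
    dotProduct_sub, dot_conjTranspose_mul, ← Matrix.mulVec_mulVec]
  simp only [Matrix.fromBlocks_mulVec, Sum.elim_comp_inl, Sum.elim_comp_inr,
    Matrix.zero_mulVec, add_zero, zero_add, star_sum_elim, sumElim_dotProduct_sumElim]
  ring

lemma re_dot_smul {n : Type*} [Fintype n] (X : Matrix n n ℂ) (z : ℂ) (v : n → ℂ) :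
    Complex.re (star (z • v) ⬝ᵥ X *ᵥ (z • v))
      = ‖z‖ ^ 2 * Complex.re (star v ⬝ᵥ X *ᵥ v) := by
  rw [star_smul, Matrix.mulVec_smul, dotProduct_smul, smul_dotProduct]
  simp only [smul_eq_mul, ← mul_assoc]
  rw [show z * star z = ((‖z‖ ^ 2 : ℝ) : ℂ) from by
    rw [show (star z) = (starRingEnd ℂ) z from rfl, Complex.mul_conj, Complex.normSq_eq_norm_sq]]
  exact Complex.re_ofReal_mul _ _

lemma mulVec_injective_of_isUnit {n : Type*} [Fintype n] [DecidableEq n]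
    {M : Matrix n n ℂ} (hM : IsUnit M) {v : n → ℂ} (hv : M *ᵥ v = 0) : v = 0 := by
  by_contra h
  have hdet : M.det = 0 := (Matrix.exists_mulVec_eq_zero_iff).mp ⟨v, h, hv⟩
  exact ((Matrix.isUnit_iff_isUnit_det M).mp hM).ne_zero hdet

lemma spec_lt_one {n : Type*} [Fintype n] [DecidableEq n]
    (A : Matrix n n ℂ) (X : Matrix n n ℂ) (hX : X.PosSemidef) {ε : ℝ} (hε : 0 < ε)
    (h : ∀ x : n → ℂ, Complex.re (star (A *ᵥ x) ⬝ᵥ X *ᵥ (A *ᵥ x)) + ε * nsq x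
      ≤ Complex.re (star x ⬝ᵥ X *ᵥ x)) :
    ∀ z ∈ spectrum ℂ A, ‖z‖ < 1 := by
  intro z hz
  rw [spectrum.mem_iff] at hz
  have hdet : (algebraMap ℂ (Matrix n n ℂ) z - A).det = 0 := by
    by_contra hd
    exact hz ((Matrix.isUnit_iff_isUnit_det _).mpr (isUnit_iff_ne_zero.mpr hd))
  obtain ⟨v, hv, hv0⟩ := (Matrix.exists_mulVec_eq_zero_iff).mpr hdet
  have hAv : A *ᵥ v = z • v := by
    have h3 : (z • (1 : Matrix n n ℂ) - A) *ᵥ v = 0 := by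
      rwa [Algebra.algebraMap_eq_smul_one] at hv0
    rw [Matrix.sub_mulVec, Matrix.smul_mulVec, Matrix.one_mulVec, sub_eq_zero] at h3
    exact h3.symm
  have h1 := h v
  rw [hAv, re_dot_smul] at h1
  have hq : 0 ≤ Complex.re (star v ⬝ᵥ X *ᵥ v) := hX.re_dotProduct_nonneg v
  have hn : 0 < nsq v := nsq_pos hv
  by_contra habs
  push_neg at habs
  have h2 : (1 : ℝ) ≤ ‖z‖ ^ 2 := by nlinarith
  have h3 := le_mul_of_one_le_left hq h2
  nlinarith

lemma isUnit_one_sub_smul {n : Type*} [Fintype n] [DecidableEq n]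
    {A : Matrix n n ℂ} (hspec : ∀ z ∈ spectrum ℂ A, ‖z‖ < 1)
    {lam : ℂ} (hlam : ‖lam‖ < 1) : IsUnit (1 - lam • A).det := by
  by_contra h
  have hdet : (1 - lam • A).det = 0 := by rwa [isUnit_iff_ne_zero, not_not] at h
  obtain ⟨v, hv, hv0⟩ := (Matrix.exists_mulVec_eq_zero_iff).mpr hdet
  rw [Matrix.sub_mulVec, Matrix.smul_mulVec, Matrix.one_mulVec, sub_eq_zero] at hv0
  have hlam0 : lam ≠ 0 := by
    rintro rfl
    rw [zero_smul] at hv0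
    exact hv hv0
  have hAv : A *ᵥ v = lam⁻¹ • v := by
    conv_rhs => rw [hv0]
    rw [smul_smul, inv_mul_cancel₀ hlam0, one_smul]
  have hmem : lam⁻¹ ∈ spectrum ℂ A := by
    rw [spectrum.mem_iff]
    intro hU
    apply hv
    refine _root_.mulVec_injective_of_isUnit hU ?_
    rw [Algebra.algebraMap_eq_smul_one, Matrix.sub_mulVec, Matrix.smul_mulVec,
      Matrix.one_mulVec, hAv, sub_self]
  have h4 := hspec _ hmem
  rw [norm_inv] at h4
  have h0 : 0 < ‖lam‖ := by
    exact norm_pos_iff.mpr hlam0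
  have h1 : 1 < (‖lam‖)⁻¹ := (one_lt_inv₀ h0).2 hlam
  linarith

lemma quad_step {n m r : Type*} [Fintype n] [Fintype m] [Fintype r]
    (A : Matrix n n ℂ) (B : Matrix n m ℂ) (C : Matrix r n ℂ) (D : Matrix r m ℂ)
    (X : Matrix n n ℂ) (GR : Matrix r r ℂ) (GS : Matrix m m ℂ)
    (hXpsd : X.PosSemidef) {ε : ℝ} (hε : 0 < ε)
    (hco : ∀ v : n ⊕ m → ℂ, ε * nsq v ≤ Complex.re (star v ⬝ᵥ
      (-((fromBlocks Aᴴ Cᴴ Bᴴ Dᴴ) * (fromBlocks X 0 0 GR) * (fromBlocks A B C D)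
        - fromBlocks X 0 0 GS)) *ᵥ v))
    {lam : ℂ} (hlam : ‖lam‖ ≤ 1) (x : n → ℂ) (u : m → ℂ)
    (hxw : x = lam • (A *ᵥ x + B *ᵥ u)) :
    Complex.re (star (C *ᵥ x + D *ᵥ u) ⬝ᵥ GR *ᵥ (C *ᵥ x + D *ᵥ u)) + ε * nsq u
      ≤ Complex.re (star u ⬝ᵥ GS *ᵥ u) := by
  have h0 := hco (Sum.elim x u)
  rw [lmi_expand, nsq_sum_elim] at h0
  have hws : Complex.re (star x ⬝ᵥ X *ᵥ x)
      ≤ Complex.re (star (A *ᵥ x + B *ᵥ u) ⬝ᵥ X *ᵥ (A *ᵥ x + B *ᵥ u)) := by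
    conv_lhs => rw [hxw]
    rw [re_dot_smul]
    have h1 := hXpsd.re_dotProduct_nonneg (A *ᵥ x + B *ᵥ u)
    simp only [RCLike.re_to_complex] at h1
    have ha2 : ‖lam‖ ^ 2 ≤ 1 := by nlinarith [norm_nonneg lam]
    nlinarith
  have h2 : ε * nsq u ≤ ε * (nsq x + nsq u) := by
    have := nsq_nonneg x
    nlinarith
  simp only [Complex.sub_re, Complex.add_re] at h0
  linarith

end BRLAux

/-- **Strict Bounded Real Lemma, sufficiency direction** (discrete time, with
structured weights).  If `X ≻ 0` and the LMI
`[A* C*; B* D*] diag(X, Γ_R) [A B; C D] − diag(X, Γ_S) ≺ 0` holds, with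
`Γ_R = ⊕_p (I ⊗ Γ_p)`, `Γ_S = ⊕_p (I ⊗ Γ_p)` and `Γ_p ≻ 0`, then the transfer
function `M̂(λ) = D + λ C (I − λA)⁻¹ B` satisfies
`sup_{|λ|<1} ‖Γ_R^{1/2} M̂(λ) Γ_S^{−1/2}‖ < 1`.  In particular, if all
`Γ_p = I`, then the spectral radius of `A` is `< 1` and
`sup_{|λ|<1} ‖D + λC(I−λA)⁻¹B‖ < 1`. -/
theorem strict_bounded_real_lemma_sufficiency
    {P : Type*} [Fintype P] [DecidableEq P]
    (nx : ℕ) (ms mr d : P → ℕ)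
    (A : Matrix (Fin nx) (Fin nx) ℂ)
    (B : Matrix (Fin nx) (Σ p : P, Fin (ms p) × Fin (d p)) ℂ)
    (C : Matrix (Σ p : P, Fin (mr p) × Fin (d p)) (Fin nx) ℂ)
    (D : Matrix (Σ p : P, Fin (mr p) × Fin (d p)) (Σ p : P, Fin (ms p) × Fin (d p)) ℂ)
    (X : Matrix (Fin nx) (Fin nx) ℂ) (hX : X.PosDef)
    (Γ : ∀ p : P, Matrix (Fin (d p)) (Fin (d p)) ℂ) (hΓ : ∀ p, (Γ p).PosDef)
    (hLMI : (-((Matrix.fromBlocks Aᴴ Cᴴ Bᴴ Dᴴ) *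
        (Matrix.fromBlocks X 0 0
          (Matrix.blockDiagonal' fun p => (1 : Matrix (Fin (mr p)) (Fin (mr p)) ℂ) ⊗ₖ Γ p)) *
        (Matrix.fromBlocks A B C D) -
        (Matrix.fromBlocks X 0 0
          (Matrix.blockDiagonal' fun p =>
            (1 : Matrix (Fin (ms p)) (Fin (ms p)) ℂ) ⊗ₖ Γ p)))).PosDef)
    (SR : Matrix (Σ p : P, Fin (mr p) × Fin (d p)) (Σ p : P, Fin (mr p) × Fin (d p)) ℂ)
    (hSR : SR.PosSemidef ∧ SR * SR =
      Matrix.blockDiagonal' fun p => (1 : Matrix (Fin (mr p)) (Fin (mr p)) ℂ) ⊗ₖ Γ p)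
    (SS : Matrix (Σ p : P, Fin (ms p) × Fin (d p)) (Σ p : P, Fin (ms p) × Fin (d p)) ℂ)
    (hSS : SS.PosSemidef ∧ SS * SS =
      Matrix.blockDiagonal' fun p => (1 : Matrix (Fin (ms p)) (Fin (ms p)) ℂ) ⊗ₖ Γ p) :
    (∃ c : ℝ, c < 1 ∧ ∀ lam : ℂ, ‖lam‖ < 1 →
      euclideanOpNorm (SR * (D + lam • (C * (1 - lam • A)⁻¹ * B)) * SS⁻¹) ≤ c) ∧
    ((∀ p, Γ p = 1) →
      (∀ z ∈ spectrum ℂ A, ‖z‖ < 1) ∧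
      ∃ c : ℝ, c < 1 ∧ ∀ lam : ℂ, ‖lam‖ < 1 →
        euclideanOpNorm (D + lam • (C * (1 - lam • A)⁻¹ * B)) ≤ c) := by
  classical
  obtain ⟨hSRpsd, hSRsq⟩ := hSR
  obtain ⟨hSSpsd, hSSsq⟩ := hSS
  have hSRherm : SRᴴ = SR := hSRpsd.1
  have hSSherm : SSᴴ = SS := hSSpsd.1
  obtain ⟨ε, hε, hco⟩ := posDef_coercive hLMI
  have hnsqSR : ∀ y, nsq (SR *ᵥ y) = Complex.re (star y ⬝ᵥ
      (Matrix.blockDiagonal' fun p =>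
        (1 : Matrix (Fin (mr p)) (Fin (mr p)) ℂ) ⊗ₖ Γ p) *ᵥ y) := by
    intro y
    simp only [nsq]
    rw [← dot_conjTranspose_mul, hSRherm, hSRsq]
  have hnsqSS : ∀ y, nsq (SS *ᵥ y) = Complex.re (star y ⬝ᵥ
      (Matrix.blockDiagonal' fun p =>
        (1 : Matrix (Fin (ms p)) (Fin (ms p)) ℂ) ⊗ₖ Γ p) *ᵥ y) := by
    intro y
    simp only [nsq]
    rw [← dot_conjTranspose_mul, hSSherm, hSSsq]
  have hspec : ∀ z ∈ spectrum ℂ A, ‖z‖ < 1 := by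
    refine spec_lt_one A X hX.posSemidef hε ?_
    intro x
    have h0 := hco (Sum.elim x (0 : (Σ p : P, Fin (ms p) × Fin (d p)) → ℂ))
    rw [lmi_expand, nsq_sum_elim] at h0
    have hz : nsq (0 : (Σ p : P, Fin (ms p) × Fin (d p)) → ℂ) = 0 := by simp [nsq]
    have hR : 0 ≤ Complex.re (star (C *ᵥ x) ⬝ᵥ
        (Matrix.blockDiagonal' fun p =>
          (1 : Matrix (Fin (mr p)) (Fin (mr p)) ℂ) ⊗ₖ Γ p) *ᵥ (C *ᵥ x)) := by
      rw [← hnsqSR]; exact nsq_nonneg _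
    simp only [Matrix.mulVec_zero, dotProduct_zero, add_zero, hz, Complex.sub_re,
      Complex.add_re] at h0
    linarith
  have hunit : ∀ lam : ℂ, ‖lam‖ < 1 → IsUnit (1 - lam • A).det :=
    fun lam hlam => isUnit_one_sub_smul hspec hlam
  have hΓSunit : IsUnit (Matrix.blockDiagonal' fun p =>
      (1 : Matrix (Fin (ms p)) (Fin (ms p)) ℂ) ⊗ₖ Γ p) := by
    have hdet : ∀ p, IsUnit ((1 : Matrix (Fin (ms p)) (Fin (ms p)) ℂ) ⊗ₖ Γ p).det := by
      intro p
      rw [Matrix.det_kronecker]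
      simp only [Matrix.det_one, one_pow, one_mul]
      exact isUnit_iff_ne_zero.mpr (pow_ne_zero _ (hΓ p).det_pos.ne')
    have hmul : (Matrix.blockDiagonal' fun p =>
          (1 : Matrix (Fin (ms p)) (Fin (ms p)) ℂ) ⊗ₖ Γ p) *
        (Matrix.blockDiagonal' fun p =>
          ((1 : Matrix (Fin (ms p)) (Fin (ms p)) ℂ) ⊗ₖ Γ p)⁻¹) = 1 := by
      rw [← Matrix.blockDiagonal'_mul]
      rw [show (fun p => ((1 : Matrix (Fin (ms p)) (Fin (ms p)) ℂ) ⊗ₖ Γ p) *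
          ((1 : Matrix (Fin (ms p)) (Fin (ms p)) ℂ) ⊗ₖ Γ p)⁻¹) = fun p =>
          (1 : Matrix ((Fin (ms p)) × (Fin (d p))) ((Fin (ms p)) × (Fin (d p))) ℂ) from
        funext fun p => Matrix.mul_nonsing_inv _ (hdet p)]
      exact Matrix.blockDiagonal'_one
    refine (Matrix.isUnit_iff_isUnit_det _).mpr (IsUnit.of_mul_eq_one
      (Matrix.det (Matrix.blockDiagonal' fun p =>
        ((1 : Matrix (Fin (ms p)) (Fin (ms p)) ℂ) ⊗ₖ Γ p)⁻¹)) ?_)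
    rw [← Matrix.det_mul, hmul, Matrix.det_one]
  have hdetSS : IsUnit SS.det := by
    have h1 : IsUnit (SS.det * SS.det) := by
      rw [← Matrix.det_mul, hSSsq]
      exact (Matrix.isUnit_iff_isUnit_det _).mp hΓSunit
    exact isUnit_of_mul_isUnit_left h1
  have hSSmulinv : SS * SS⁻¹ = 1 := Matrix.mul_nonsing_inv SS hdetSS
  have hkey : ∀ lam : ℂ, ‖lam‖ < 1 →
      ∀ u : (Σ p : P, Fin (ms p) × Fin (d p)) → ℂ,
      nsq (SR *ᵥ ((D + lam • (C * (1 - lam • A)⁻¹ * B)) *ᵥ u))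
        ≤ nsq (SS *ᵥ u) - ε * nsq u := by
    intro lam hlam u
    have hGinv : (1 - lam • A) * (1 - lam • A)⁻¹ = 1 :=
      Matrix.mul_nonsing_inv _ (hunit lam hlam)
    set x : Fin nx → ℂ := lam • ((1 - lam • A)⁻¹ *ᵥ (B *ᵥ u)) with hxdef
    have hxw : x = lam • (A *ᵥ x + B *ᵥ u) := by
      have h1 : x - lam • (A *ᵥ x) = lam • (B *ᵥ u) := by
        have h2 : (1 - lam • A) *ᵥ x = lam • (B *ᵥ u) := by
          rw [hxdef, Matrix.mulVec_smul, Matrix.mulVec_mulVec, hGinv, Matrix.one_mulVec]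
        rwa [Matrix.sub_mulVec, Matrix.smul_mulVec, Matrix.one_mulVec] at h2
      rw [smul_add, ← h1]
      abel
    have hy : (D + lam • (C * (1 - lam • A)⁻¹ * B)) *ᵥ u = C *ᵥ x + D *ᵥ u := by
      rw [Matrix.add_mulVec, Matrix.smul_mulVec, ← Matrix.mulVec_mulVec,
        ← Matrix.mulVec_mulVec, ← Matrix.mulVec_smul, ← hxdef]
      exact add_comm _ _
    rw [hy, hnsqSR, hnsqSS]
    have hq := quad_step A B C D X _ _ hX.posSemidef hε hco hlam.le x u hxw
    linarith
  set K := euclideanOpNorm SS ^ 2 + 1 with hK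
  have hKpos : 0 < K := by positivity
  set c2 := max 0 (1 - ε / K) with hc2
  have hc2nonneg : 0 ≤ c2 := le_max_left _ _
  have hc2lt : c2 < 1 := by
    have hδ : 0 < ε / K := div_pos hε hKpos
    rw [hc2, max_lt_iff]
    constructor
    · exact one_pos
    · linarith
  set c := Real.sqrt c2 with hc
  have hc1 : c < 1 := by
    rw [hc]
    exact (Real.sqrt_lt' one_pos).2 (by rw [one_pow]; exact hc2lt)
  have hc0 : 0 ≤ c := Real.sqrt_nonneg _
  have hmain : ∀ lam : ℂ, ‖lam‖ < 1 →
      euclideanOpNorm (SR * (D + lam • (C * (1 - lam • A)⁻¹ * B)) * SS⁻¹) ≤ c := by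
    intro lam hlam
    refine euclideanOpNorm_le_of _ hc0 fun v => ?_
    have hmv : (SR * (D + lam • (C * (1 - lam • A)⁻¹ * B)) * SS⁻¹) *ᵥ v
        = SR *ᵥ ((D + lam • (C * (1 - lam • A)⁻¹ * B)) *ᵥ (SS⁻¹ *ᵥ v)) := by
      rw [← Matrix.mulVec_mulVec, ← Matrix.mulVec_mulVec]
    set u := SS⁻¹ *ᵥ v with hu
    have hSSu : SS *ᵥ u = v := by
      rw [hu, Matrix.mulVec_mulVec, hSSmulinv, Matrix.one_mulVec]
    have h1 := hkey lam hlam u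
    rw [hSSu] at h1
    have h2 : nsq v ≤ K * nsq u := by
      have h3 := nsq_mulVec_le_sq SS u
      rw [hSSu] at h3
      have h4 := nsq_nonneg u
      rw [hK]
      nlinarith
    have h4 : nsq (SR *ᵥ ((D + lam • (C * (1 - lam • A)⁻¹ * B)) *ᵥ u)) ≤ c2 * nsq v := by
      have h5 : ε / K * nsq v ≤ ε * nsq u := by
        calc ε / K * nsq v ≤ ε / K * (K * nsq u) :=
              mul_le_mul_of_nonneg_left h2 (by positivity)
          _ = ε * nsq u := by field_simp
      have h6 : nsq (SR *ᵥ ((D + lam • (C * (1 - lam • A)⁻¹ * B)) *ᵥ u))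
          ≤ (1 - ε / K) * nsq v := by
        have h7 : (1 - ε / K) * nsq v = nsq v - ε / K * nsq v := by ring
        rw [h7]
        linarith
      calc nsq (SR *ᵥ ((D + lam • (C * (1 - lam • A)⁻¹ * B)) *ᵥ u))
          ≤ (1 - ε / K) * nsq v := h6
        _ ≤ c2 * nsq v := mul_le_mul_of_nonneg_right (le_max_right _ _) (nsq_nonneg v)
    rw [hmv]
    have h8 : Real.sqrt (nsq (SR *ᵥ ((D + lam • (C * (1 - lam • A)⁻¹ * B)) *ᵥ u)))
        ≤ Real.sqrt (c2 * nsq v) := Real.sqrt_le_sqrt h4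
    rwa [Real.sqrt_mul hc2nonneg] at h8
  refine ⟨⟨c, hc1, hmain⟩, fun hΓ1 => ⟨hspec, c, hc1, fun lam hlam => ?_⟩⟩
  have hSR1 : SR = 1 := by
    open scoped MatrixOrder Matrix.Norms.L2Operator in
    refine (CFC.sq_eq_sq_iff SR 1 hSRpsd.nonneg Matrix.PosSemidef.one.nonneg).mp ?_
    rw [pow_two, pow_two, hSRsq, one_mul]
    rw [show (fun p => (1 : Matrix (Fin (mr p)) (Fin (mr p)) ℂ) ⊗ₖ Γ p) = fun p =>
        (1 : Matrix ((Fin (mr p)) × (Fin (d p))) ((Fin (mr p)) × (Fin (d p))) ℂ) from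
      funext fun p => by rw [hΓ1 p, Matrix.one_kronecker_one]]
    exact Matrix.blockDiagonal'_one
  have hSS1 : SS = 1 := by
    open scoped MatrixOrder Matrix.Norms.L2Operator in
    refine (CFC.sq_eq_sq_iff SS 1 hSSpsd.nonneg Matrix.PosSemidef.one.nonneg).mp ?_
    rw [pow_two, pow_two, hSSsq, one_mul]
    rw [show (fun p => (1 : Matrix (Fin (ms p)) (Fin (ms p)) ℂ) ⊗ₖ Γ p) = fun p =>
        (1 : Matrix ((Fin (ms p)) × (Fin (d p))) ((Fin (ms p)) × (Fin (d p))) ℂ) from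
      funext fun p => by rw [hΓ1 p, Matrix.one_kronecker_one]]
    exact Matrix.blockDiagonal'_one
  have h9 := hmain lam hlam
  rwa [hSR1, hSS1, inv_one, Matrix.one_mul, Matrix.mul_one] at h9
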